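/- arXiv:2403.00121 — 2 statements merged into one kernel-verified Lean document; each statement's English description precedes it below -/
import Mathlib

section
/- Let A ∈ ℝ^{m×n} with columns partitioned into sets V_1,…,V_k (viewed as submatrices), and for each i let Û_i ∈ ℝ^{m×d_i} contain the top d_i left singular vectors of V_i, with Σ d_i = r < rank(A). Let 𝒰_r ∈ ℝ^{m×r} contain the top r left singular vectors of A and A_r the best rank-r approximation of A. With L* = max_i ⌈r/d_i⌉, the partition energy satisfies Σ_{i=1}^k ‖(I_m − Û_i Û_i^T) V_i‖_F² ≤ ‖A − A_r‖_F² + (1 − 1/L*)‖A_r‖_F². -/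
open Matrix BigOperators

/-- The Frobenius norm of a real matrix. -/
noncomputable def frobNorm {m n : Type*} [Fintype m] [Fintype n] (M : Matrix m n ℝ) : ℝ :=
  Real.sqrt (∑ i, ∑ j, (M i j) ^ 2)

/-- The spectral (ℓ²-operator) norm of a real matrix. -/
noncomputable def specNorm {m n : Type*} [Fintype m] [Fintype n] [DecidableEq n]
    (M : Matrix m n ℝ) : ℝ :=
  ‖LinearMap.toContinuousLinearMap (Matrix.toEuclideanLin M)‖

/-- Moore–Penrose pseudoinverse of a full-column-rank matrix: `(MᵀM)⁻¹Mᵀ`. -/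
noncomputable def pinvFR {m n : Type*} [Fintype m] [Fintype n] [DecidableEq n]
    (M : Matrix m n ℝ) : Matrix n m ℝ :=
  (Mᵀ * M)⁻¹ * Mᵀ

/-- The Euclidean norm of a real vector. -/
noncomputable def euclNorm {n : Type*} [Fintype n] (x : n → ℝ) : ℝ :=
  Real.sqrt (∑ i, (x i) ^ 2)

noncomputable def frobSq {m n : Type*} [Fintype m] [Fintype n] (M : Matrix m n ℝ) : ℝ :=
  ∑ i, ∑ j, (M i j) ^ 2

lemma frobSq_nonneg {m n : Type*} [Fintype m] [Fintype n] (M : Matrix m n ℝ) : 0 ≤ frobSq M := by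
  apply Finset.sum_nonneg; intro i _; apply Finset.sum_nonneg; intro j _; positivity

lemma frobNorm_sq {m n : Type*} [Fintype m] [Fintype n] (M : Matrix m n ℝ) :
    frobNorm M ^ 2 = frobSq M :=
  Real.sq_sqrt (frobSq_nonneg M)

lemma frobSq_eq_trace {m n : Type*} [Fintype m] [Fintype n] (M : Matrix m n ℝ) :
    frobSq M = Matrix.trace (Mᵀ * M) := by
  simp only [frobSq, Matrix.trace, Matrix.diag, Matrix.mul_apply, Matrix.transpose_apply, sq]
  rw [Finset.sum_comm]

lemma frobSq_mul_orth {m n p : Type*} [Fintype m] [Fintype n] [Fintype p] [DecidableEq n]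
    (P : Matrix m n ℝ) (hP : Pᵀ * P = 1) (X : Matrix n p ℝ) :
    frobSq (P * X) = frobSq X := by
  rw [frobSq_eq_trace, frobSq_eq_trace, Matrix.transpose_mul, Matrix.mul_assoc,
    ← Matrix.mul_assoc Pᵀ, hP, Matrix.one_mul]

lemma frobSq_proj_compl {m n p : Type*} [Fintype m] [Fintype n] [Fintype p] [DecidableEq m]
    [DecidableEq n]
    (P : Matrix m n ℝ) (hP : Pᵀ * P = 1) (X : Matrix m p ℝ) :
    frobSq ((1 - P * Pᵀ) * X) = frobSq X - frobSq (P * Pᵀ * X) := by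
  set Q := P * Pᵀ with hQdef
  have hQ : Q * Q = Q := by
    rw [hQdef, Matrix.mul_assoc, ← Matrix.mul_assoc Pᵀ, hP, Matrix.one_mul]
  have ht : Qᵀ = Q := by rw [hQdef, Matrix.transpose_mul, Matrix.transpose_transpose]
  have htQ : (1 - Q)ᵀ = 1 - Q := by rw [Matrix.transpose_sub, Matrix.transpose_one, ht]
  have h2 : (1 - Q) * (1 - Q) = 1 - Q := by
    rw [Matrix.mul_sub, Matrix.sub_mul, Matrix.sub_mul, hQ]
    simp
  have hL : ((1 - Q) * X)ᵀ * ((1 - Q) * X) = Xᵀ * X - Xᵀ * (Q * X) := by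
    rw [Matrix.transpose_mul, htQ, Matrix.mul_assoc, ← Matrix.mul_assoc (1 - Q), h2,
      Matrix.sub_mul, Matrix.one_mul, Matrix.mul_sub, ← Matrix.mul_assoc]
  have hR : (Q * X)ᵀ * (Q * X) = Xᵀ * (Q * X) := by
    rw [Matrix.transpose_mul, ht, Matrix.mul_assoc, ← Matrix.mul_assoc Q, hQ]
  rw [frobSq_eq_trace, frobSq_eq_trace, frobSq_eq_trace, hL, hR, Matrix.trace_sub]

lemma frobSq_col_split {m : ℕ} {k : ℕ} {nn : Fin k → ℕ}
    (B : Matrix (Fin m) ((i : Fin k) × Fin (nn i)) ℝ) :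
    frobSq B = ∑ i, frobSq (B.submatrix id (Sigma.mk i)) := by
  simp only [frobSq, Matrix.submatrix_apply, id_eq]
  rw [Finset.sum_comm]
  rw [← Finset.univ_sigma_univ, Finset.sum_sigma]
  apply Finset.sum_congr rfl
  intro i _
  rw [Finset.sum_comm]

lemma submatrix_col_mul {m p : ℕ} {k : ℕ} {nn : Fin k → ℕ} (M : Matrix (Fin p) (Fin m) ℝ)
    (B : Matrix (Fin m) ((i : Fin k) × Fin (nn i)) ℝ) (i : Fin k) :
    (M * B).submatrix id (Sigma.mk i) = M * (B.submatrix id (Sigma.mk i)) := by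
  ext a j
  simp [Matrix.mul_apply]

lemma exists_good_subset {L dd r : ℕ} (hd : 0 < dd) (hrL : r ≤ L * dd) (g : Fin r → ℝ)
    (hg : ∀ t, 0 ≤ g t) :
    ∃ S : Finset (Fin r), S.card ≤ dd ∧ (∑ t, g t) / (L : ℝ) ≤ ∑ t ∈ S, g t := by
  rcases Nat.eq_zero_or_pos L with hL | hL
  · subst hL
    refine ⟨∅, by simp, ?_⟩
    simp only [Nat.cast_zero, div_zero, Finset.sum_empty]
    have : r = 0 := by omega
    subst this
    simp
  · have hfib : ∀ t : Fin r, (t : ℕ) / dd < L := by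
      intro t
      exact Nat.div_lt_of_lt_mul (lt_of_lt_of_le t.isLt (hrL.trans_eq (Nat.mul_comm L dd)))
    set f : Fin r → Fin L := fun t => ⟨(t : ℕ) / dd, hfib t⟩ with hf
    have hsum : ∑ j : Fin L, ∑ t ∈ Finset.univ.filter (fun t => f t = j), g t = ∑ t, g t :=
      Finset.sum_fiberwise_of_maps_to (fun t _ => Finset.mem_univ (f t)) g
    have hne : (Finset.univ : Finset (Fin L)).Nonempty := ⟨⟨0, hL⟩, Finset.mem_univ _⟩
    obtain ⟨j, -, hj⟩ := Finset.exists_le_of_sum_le hne (show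
        ∑ _j : Fin L, (∑ t, g t) / (L : ℝ) ≤
          ∑ j : Fin L, ∑ t ∈ Finset.univ.filter (fun t => f t = j), g t by
      rw [hsum, Finset.sum_const, Finset.card_univ, Fintype.card_fin, nsmul_eq_mul,
        mul_div_cancel₀]
      positivity)
    refine ⟨Finset.univ.filter (fun t => f t = j), ?_, hj⟩
    have hinj : Set.InjOn (fun t : Fin r => (⟨(t : ℕ) % dd, Nat.mod_lt _ hd⟩ : Fin dd))
        (Finset.univ.filter (fun t => f t = j)) := by
      intro a ha b hb hab
      simp only [Finset.coe_filter, Set.mem_setOf_eq, hf] at ha hb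
      have ha' : (a : ℕ) / dd = (j : ℕ) := by simpa using congrArg Fin.val ha.2
      have hb' : (b : ℕ) / dd = (j : ℕ) := by simpa using congrArg Fin.val hb.2
      simp only [Fin.mk.injEq] at hab
      have h1 := Nat.div_add_mod (a : ℕ) dd
      have h2 := Nat.div_add_mod (b : ℕ) dd
      refine Fin.ext ?_
      calc (a : ℕ) = dd * ((a : ℕ) / dd) + (a : ℕ) % dd := (Nat.div_add_mod _ _).symm
        _ = dd * ((b : ℕ) / dd) + (b : ℕ) % dd := by rw [ha', hb', hab]
        _ = (b : ℕ) := Nat.div_add_mod _ _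
    calc (Finset.univ.filter (fun t => f t = j)).card
        ≤ (Finset.univ : Finset (Fin dd)).card :=
          Finset.card_le_card_of_injOn _ (fun t _ => Finset.mem_univ _) hinj
      _ = dd := by simp

lemma block_subset_proj {m r : ℕ} {ν : Type*} [Fintype ν] (Ur : Matrix (Fin m) (Fin r) ℝ)
    (hUr : Urᵀ * Ur = 1) (V : Matrix (Fin m) ν ℝ) (S : Finset (Fin r)) :
    ∃ P : Matrix (Fin m) (Fin S.card) ℝ, Pᵀ * P = 1 ∧
      frobSq (P * Pᵀ * V) = ∑ t ∈ S, ∑ j, ((Urᵀ * V) t j) ^ 2 := by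
  set ι : Fin S.card → Fin r := fun b => ((S.equivFin.symm b : {t // t ∈ S}) : Fin r) with hι
  have hιinj : Function.Injective ι := fun a b h =>
    S.equivFin.symm.injective (Subtype.ext h)
  set P : Matrix (Fin m) (Fin S.card) ℝ := Ur.submatrix id ι with hPdef
  have hP : Pᵀ * P = 1 := by
    ext a b
    have h1 : (Pᵀ * P) a b = (Urᵀ * Ur) (ι a) (ι b) := by
      simp [hPdef, Matrix.mul_apply]
    rw [h1, hUr]
    by_cases hab : a = b
    · simp [hab, Matrix.one_apply]
    · rw [Matrix.one_apply_ne (fun h => hab (hιinj h)), Matrix.one_apply_ne hab]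
  refine ⟨P, hP, ?_⟩
  rw [Matrix.mul_assoc, frobSq_mul_orth P hP]
  have h2 : frobSq (Pᵀ * V) = ∑ a : Fin S.card, ∑ j, ((Urᵀ * V) (ι a) j) ^ 2 := by
    simp only [frobSq]
    apply Finset.sum_congr rfl
    intro a _
    apply Finset.sum_congr rfl
    intro j _
    have : (Pᵀ * V) a j = (Urᵀ * V) (ι a) j := by simp [hPdef, Matrix.mul_apply]
    rw [this]
  rw [h2, ← Finset.sum_coe_sort S (fun t => ∑ j, ((Urᵀ * V) t j) ^ 2)]
  exact (Fintype.sum_equiv S.equivFin _ _ (fun x => by simp [hι])).symm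

/-- partition energy bound: with columns of `A` partitioned into blocks
`Vᵢ`, `Ûᵢ` the top `dᵢ` left singular vectors of `Vᵢ`, `Σ dᵢ = r`, `𝒰_r` the top `r` left
singular vectors of `A`, `A_r = 𝒰_r𝒰_rᵀA`, and `L* = maxᵢ ⌈r/dᵢ⌉`:
`Σᵢ ‖(I - ÛᵢÛᵢᵀ)Vᵢ‖_F² ≤ ‖A - A_r‖_F² + (1 - 1/L*)‖A_r‖_F²`. -/
theorem partition_energy_bound {m k : ℕ} (nn d : Fin k → ℕ) (hd : ∀ i, 0 < d i)
    (A : Matrix (Fin m) ((i : Fin k) × Fin (nn i)) ℝ)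
    (r : ℕ) (hr : r = ∑ i, d i) (hrank : r < A.rank)
    (Uh : (i : Fin k) → Matrix (Fin m) (Fin (d i)) ℝ)
    (hUh : ∀ i, (Uh i)ᵀ * Uh i = 1)
    (hmax : ∀ i (d' : ℕ), d' ≤ d i → ∀ P : Matrix (Fin m) (Fin d') ℝ, Pᵀ * P = 1 →
      frobNorm (P * Pᵀ * A.submatrix id (Sigma.mk i)) ≤
        frobNorm (Uh i * (Uh i)ᵀ * A.submatrix id (Sigma.mk i)))
    (Ur : Matrix (Fin m) (Fin r) ℝ) (hUr : Urᵀ * Ur = 1)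
    (hEY : ∀ P : Matrix (Fin m) (Fin r) ℝ, Pᵀ * P = 1 →
      frobNorm (A - Ur * Urᵀ * A) ≤ frobNorm (A - P * Pᵀ * A))
    (Ar : Matrix (Fin m) ((i : Fin k) × Fin (nn i)) ℝ) (hAr : Ar = Ur * Urᵀ * A)
    (Lstar : ℕ) (hL : Lstar = Finset.univ.sup fun i => (r + d i - 1) / d i) :
    ∑ i, frobNorm ((1 - Uh i * (Uh i)ᵀ) * A.submatrix id (Sigma.mk i)) ^ 2 ≤
      frobNorm (A - Ar) ^ 2 + (1 - 1 / (Lstar : ℝ)) * frobNorm Ar ^ 2 := by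
  -- k is positive
  have hk : 0 < k := by
    rcases Nat.eq_zero_or_pos k with hk0 | hk0
    · exfalso
      subst hk0
      have h0 : Fintype.card ((i : Fin 0) × Fin (nn i)) = 0 := by simp
      have := A.rank_le_card_width
      omega
    · exact hk0
  -- Lstar ≥ 1
  have hL1 : 1 ≤ Lstar := by
    have hi0 : d ⟨0, hk⟩ ≤ r := by
      rw [hr]
      exact Finset.single_le_sum (fun i _ => Nat.zero_le _) (Finset.mem_univ _)
    have h1 : 1 ≤ (r + d ⟨0, hk⟩ - 1) / d ⟨0, hk⟩ := by
      rw [Nat.one_le_div_iff (hd _)]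
      have := hd ⟨0, hk⟩
      omega
    calc 1 ≤ (r + d ⟨0, hk⟩ - 1) / d ⟨0, hk⟩ := h1
      _ ≤ Lstar := hL ▸ Finset.le_sup (f := fun i => (r + d i - 1) / d i) (Finset.mem_univ _)
  -- r ≤ Lstar * d i
  have hrLd : ∀ i, r ≤ Lstar * d i := by
    intro i
    have hq : (r + d i - 1) / d i ≤ Lstar := hL ▸ Finset.le_sup (f := fun i => (r + d i - 1) / d i) (Finset.mem_univ i)
    have h1 := Nat.div_add_mod (r + d i - 1) (d i)
    have h2 := Nat.mod_lt (r + d i - 1) (hd i)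
    have hdi := hd i
    have h3 : r ≤ d i * ((r + d i - 1) / d i) := by omega
    calc r ≤ d i * ((r + d i - 1) / d i) := h3
      _ ≤ d i * Lstar := Nat.mul_le_mul_left _ hq
      _ = Lstar * d i := Nat.mul_comm _ _
  have hLpos : (0 : ℝ) < (Lstar : ℝ) := by exact_mod_cast hL1
  -- per-block bound
  have hblock : ∀ i, frobSq (Urᵀ * A.submatrix id (Sigma.mk i)) / (Lstar : ℝ) ≤
      frobSq (Uh i * (Uh i)ᵀ * A.submatrix id (Sigma.mk i)) := by
    intro i
    set V := A.submatrix id (Sigma.mk i) with hV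
    set g : Fin r → ℝ := fun t => ∑ j, ((Urᵀ * V) t j) ^ 2 with hg
    have hgnn : ∀ t, 0 ≤ g t := fun t => Finset.sum_nonneg fun j _ => sq_nonneg _
    obtain ⟨S, hScard, hSsum⟩ := exists_good_subset (hd i) (hrLd i) g hgnn
    obtain ⟨P, hP, hPsum⟩ := block_subset_proj Ur hUr V S
    have hfg : frobSq (Urᵀ * V) = ∑ t, g t := rfl
    have hmax' : frobSq (P * Pᵀ * V) ≤ frobSq (Uh i * (Uh i)ᵀ * V) := by
      have h := hmax i S.card hScard P hP
      have h2 : frobNorm (P * Pᵀ * V) ^ 2 ≤ frobNorm (Uh i * (Uh i)ᵀ * V) ^ 2 :=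
        pow_le_pow_left₀ (Real.sqrt_nonneg _) h 2
      rwa [frobNorm_sq, frobNorm_sq] at h2
    calc frobSq (Urᵀ * V) / (Lstar : ℝ) = (∑ t, g t) / (Lstar : ℝ) := by rw [hfg]
      _ ≤ ∑ t ∈ S, g t := hSsum
      _ = frobSq (P * Pᵀ * V) := hPsum.symm
      _ ≤ frobSq (Uh i * (Uh i)ᵀ * V) := hmax'
  -- assemble
  have hArA : frobSq Ar = frobSq (Urᵀ * A) := by
    rw [hAr, Matrix.mul_assoc, frobSq_mul_orth Ur hUr]
  have hAmAr : frobNorm (A - Ar) ^ 2 = frobSq A - frobSq Ar := by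
    have h1 : A - Ar = (1 - Ur * Urᵀ) * A := by
      rw [hAr, Matrix.sub_mul, Matrix.one_mul]
    rw [frobNorm_sq, h1, frobSq_proj_compl Ur hUr A, ← hAr]
  have hsplitA : frobSq A = ∑ i, frobSq (A.submatrix id (Sigma.mk i)) := frobSq_col_split A
  have hsplitUA : frobSq (Urᵀ * A) = ∑ i, frobSq (Urᵀ * A.submatrix id (Sigma.mk i)) := by
    rw [frobSq_col_split (Urᵀ * A)]
    exact Finset.sum_congr rfl fun i _ => by rw [submatrix_col_mul]
  have hLHS : ∑ i, frobNorm ((1 - Uh i * (Uh i)ᵀ) * A.submatrix id (Sigma.mk i)) ^ 2 =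
      ∑ i, (frobSq (A.submatrix id (Sigma.mk i)) -
        frobSq (Uh i * (Uh i)ᵀ * A.submatrix id (Sigma.mk i))) := by
    exact Finset.sum_congr rfl fun i _ => by
      rw [frobNorm_sq, frobSq_proj_compl (Uh i) (hUh i)]
  have hkey : frobSq (Urᵀ * A) / (Lstar : ℝ) ≤
      ∑ i, frobSq (Uh i * (Uh i)ᵀ * A.submatrix id (Sigma.mk i)) := by
    rw [hsplitUA, Finset.sum_div]
    exact Finset.sum_le_sum fun i _ => hblock i
  rw [hLHS, Finset.sum_sub_distrib, hAmAr, frobNorm_sq Ar, ← hsplitA]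
  rw [hArA] at *
  have : (frobSq A - frobSq (Urᵀ * A)) + (1 - 1 / (Lstar : ℝ)) * frobSq (Urᵀ * A)
      = frobSq A - frobSq (Urᵀ * A) / (Lstar : ℝ) := by
    field_simp
    ring
  rw [this]
  linarith [hkey]
end

section
/- Let A ∈ ℝ^{m×n} with columns partitioned into V_1,…,V_k, and suppose C ∈ ℝ^{m×r} satisfies C C† ⪰ C_i C_i† in the sense that ‖(I_m − CC†)V_i‖_F ≤ ‖(I_m − C_i C_i†)V_i‖_F for each i, where C_i are the columns of C lying in V_i (each C_i full column rank d_i). Then ‖(I_m − CC†)A‖_F² ≤ Σ_{i=1}^k ( ‖(I_m − Û_i Û_i^T)V_i‖_F · (1 + ‖C_i†‖₂ ‖V_i‖₂) )², where Û_i contains the top d_i left singular vectors of V_i. -/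
open Matrix BigOperators

set_option linter.unusedSectionVars false
set_option linter.deprecated false

section aux
variable {α β γ : Type*} [Fintype α] [Fintype β] [Fintype γ]

lemma frobNorm_nonneg (M : Matrix α β ℝ) : 0 ≤ frobNorm M := Real.sqrt_nonneg _

lemma frobNorm_sq_s15 (M : Matrix α β ℝ) : frobNorm M ^ 2 = ∑ i, ∑ j, M i j ^ 2 :=
  Real.sq_sqrt (by positivity)

lemma frobNorm_eq_norm (M : Matrix α β ℝ) :
    frobNorm M = ‖(WithLp.equiv 2 (α × β → ℝ)).symm (fun p => M p.1 p.2)‖ := by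
  rw [EuclideanSpace.norm_eq]
  simp [frobNorm, Fintype.sum_prod_type, Real.norm_eq_abs, sq_abs]

lemma frobNorm_add_le (M N : Matrix α β ℝ) :
    frobNorm (M + N) ≤ frobNorm M + frobNorm N := by
  rw [frobNorm_eq_norm, frobNorm_eq_norm, frobNorm_eq_norm]
  have := norm_add_le ((WithLp.equiv 2 (α × β → ℝ)).symm (fun p => M p.1 p.2))
    ((WithLp.equiv 2 (α × β → ℝ)).symm (fun p => N p.1 p.2))
  have e : (WithLp.equiv 2 (α × β → ℝ)).symm (fun p => (M + N) p.1 p.2) =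
      (WithLp.equiv 2 (α × β → ℝ)).symm (fun p => M p.1 p.2) +
        (WithLp.equiv 2 (α × β → ℝ)).symm (fun p => N p.1 p.2) := rfl
  rw [e]; exact this

lemma sqrt_sum_sq_eq_norm (x : α → ℝ) :
    Real.sqrt (∑ i, x i ^ 2) = ‖(WithLp.equiv 2 (α → ℝ)).symm x‖ := by
  rw [EuclideanSpace.norm_eq]
  simp [Real.norm_eq_abs, sq_abs]

lemma specNorm_nonneg [DecidableEq β] (M : Matrix α β ℝ) : 0 ≤ specNorm M := norm_nonneg _

lemma mulVec_sqnorm_le [DecidableEq β] (M : Matrix α β ℝ) (v : β → ℝ) :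
    Real.sqrt (∑ i, (M.mulVec v) i ^ 2) ≤ specNorm M * Real.sqrt (∑ j, v j ^ 2) := by
  rw [sqrt_sum_sq_eq_norm, sqrt_sum_sq_eq_norm]
  have h := (LinearMap.toContinuousLinearMap (Matrix.toEuclideanLin M)).le_opNorm
      ((WithLp.equiv 2 (β → ℝ)).symm v)
  simpa [specNorm] using h

lemma specNorm_transpose [DecidableEq α] [DecidableEq β] (M : Matrix α β ℝ) :
    specNorm Mᵀ = specNorm M := by
  have h1 : Mᵀ = Mᴴ := by ext i j; simp [Matrix.conjTranspose_apply]
  rw [specNorm, h1, Matrix.toEuclideanLin_conjTranspose_eq_adjoint,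
    LinearMap.adjoint_toContinuousLinearMap]
  exact ContinuousLinearMap.adjoint.norm_map _

lemma frobNorm_mul_spec_le [DecidableEq β] [DecidableEq γ]
    (M : Matrix α β ℝ) (N : Matrix β γ ℝ) :
    frobNorm (M * N) ≤ frobNorm M * specNorm N := by
  have hrow : ∀ i, Real.sqrt (∑ j, (M * N) i j ^ 2) ≤
      specNorm N * Real.sqrt (∑ x, M i x ^ 2) := by
    intro i
    have h : (fun j => (M * N) i j) = Nᵀ.mulVec (M i) := by
      ext j; simp [Matrix.mul_apply, Matrix.mulVec, dotProduct, mul_comm]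
    calc Real.sqrt (∑ j, (M * N) i j ^ 2) = Real.sqrt (∑ j, (Nᵀ.mulVec (M i)) j ^ 2) := by
          congr 1; exact Finset.sum_congr rfl fun j _ => by rw [congrFun h j]
      _ ≤ specNorm Nᵀ * Real.sqrt (∑ x, M i x ^ 2) := mulVec_sqnorm_le _ _
      _ = specNorm N * Real.sqrt (∑ x, M i x ^ 2) := by rw [specNorm_transpose]
  have hsq : ∀ i, ∑ j, (M * N) i j ^ 2 ≤ specNorm N ^ 2 * ∑ x, M i x ^ 2 := by
    intro i
    have h0 : (0:ℝ) ≤ ∑ j, (M * N) i j ^ 2 := by positivity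
    have := hrow i
    have h2 := mul_self_le_mul_self (Real.sqrt_nonneg _) this
    rw [Real.mul_self_sqrt h0] at h2
    calc ∑ j, (M * N) i j ^ 2 ≤ (specNorm N * Real.sqrt (∑ x, M i x ^ 2)) *
          (specNorm N * Real.sqrt (∑ x, M i x ^ 2)) := h2
      _ = specNorm N ^ 2 * ∑ x, M i x ^ 2 := by
          rw [mul_mul_mul_comm, Real.mul_self_sqrt (by positivity)]; ring
  have hfs : frobNorm (M * N) ^ 2 ≤ (frobNorm M * specNorm N) ^ 2 := by
    rw [frobNorm_sq_s15, mul_pow, frobNorm_sq_s15]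
    calc ∑ i, ∑ j, (M * N) i j ^ 2 ≤ ∑ i, specNorm N ^ 2 * ∑ x, M i x ^ 2 :=
          Finset.sum_le_sum fun i _ => hsq i
      _ = (∑ i, ∑ x, M i x ^ 2) * specNorm N ^ 2 := by rw [← Finset.mul_sum]; ring
  exact le_of_pow_le_pow_left₀ two_ne_zero (mul_nonneg (frobNorm_nonneg M) (specNorm_nonneg N)) hfs

lemma frobNorm_sq_trace (M : Matrix α β ℝ) :
    frobNorm M ^ 2 = Matrix.trace (Mᵀ * M) := by
  rw [frobNorm_sq_s15, Matrix.trace]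
  simp only [Matrix.diag_apply, Matrix.mul_apply, Matrix.transpose_apply, pow_two]
  exact Finset.sum_comm

lemma trace_gram_nonneg (M : Matrix α β ℝ) : 0 ≤ Matrix.trace (Mᵀ * M) := by
  rw [← frobNorm_sq_trace]; positivity

lemma one_sub_proj_sq [DecidableEq α] {Q : Matrix α α ℝ} (hQi : Q * Q = Q) :
    (1 - Q) * (1 - Q) = 1 - Q := by
  rw [sub_mul, one_mul, mul_sub, mul_one, hQi, sub_self, sub_zero]

lemma one_sub_proj_gram [DecidableEq α] {Q : Matrix α α ℝ} (hQs : Qᵀ = Q) (hQi : Q * Q = Q)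
    (X : Matrix α β ℝ) :
    ((1 - Q) * X)ᵀ * ((1 - Q) * X) = Xᵀ * ((1 - Q) * X) := by
  rw [Matrix.transpose_mul, Matrix.transpose_sub, Matrix.transpose_one, hQs, Matrix.mul_assoc,
    ← Matrix.mul_assoc (1 - Q), one_sub_proj_sq hQi]

lemma frobNorm_proj_mul_le [DecidableEq α] {Q : Matrix α α ℝ} (hQs : Qᵀ = Q) (hQi : Q * Q = Q)
    (X : Matrix α β ℝ) : frobNorm ((1 - Q) * X) ≤ frobNorm X := by
  have key : frobNorm ((1 - Q) * X) ^ 2 = frobNorm X ^ 2 - Matrix.trace ((Q * X)ᵀ * (Q * X)) := by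
    rw [frobNorm_sq_trace, frobNorm_sq_trace, one_sub_proj_gram hQs hQi]
    have h2 : (Q * X)ᵀ * (Q * X) = Xᵀ * (Q * X) := by
      rw [Matrix.transpose_mul, hQs, Matrix.mul_assoc, ← Matrix.mul_assoc Q, hQi]
    rw [h2, Matrix.sub_mul, Matrix.one_mul, Matrix.mul_sub, Matrix.trace_sub]
  have h2 : frobNorm ((1 - Q) * X) ^ 2 ≤ frobNorm X ^ 2 := by
    rw [key]; linarith [trace_gram_nonneg (Q * X)]
  exact le_of_pow_le_pow_left₀ two_ne_zero (frobNorm_nonneg X) h2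

lemma frobNorm_proj_swap [DecidableEq α] {P Q : Matrix α α ℝ} (hPs : Pᵀ = P) (hPi : P * P = P)
    (hQs : Qᵀ = Q) (hQi : Q * Q = Q) (htr : Matrix.trace P = Matrix.trace Q) :
    frobNorm ((1 - Q) * P) = frobNorm ((1 - P) * Q) := by
  have key : ∀ (R S : Matrix α α ℝ), Rᵀ = R → R * R = R → Sᵀ = S → S * S = S →
      frobNorm ((1 - S) * R) ^ 2 = Matrix.trace R - Matrix.trace (R * S) := by
    intro R S hRs hRi hSs hSi
    rw [frobNorm_sq_trace, one_sub_proj_gram hSs hSi, hRs, sub_mul, one_mul, Matrix.mul_sub,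
      Matrix.trace_sub, hRi]
    congr 1
    rw [← Matrix.mul_assoc, Matrix.trace_mul_comm, ← Matrix.mul_assoc, hRi]
  have e1 := key P Q hPs hPi hQs hQi
  have e2 := key Q P hQs hQi hPs hPi
  have e3 : Matrix.trace (P * Q) = Matrix.trace (Q * P) := Matrix.trace_mul_comm _ _
  have hsq : frobNorm ((1 - Q) * P) ^ 2 = frobNorm ((1 - P) * Q) ^ 2 := by
    rw [e1, e2, htr, e3]
  have h4 := congrArg Real.sqrt hsq
  rwa [Real.sqrt_sq (frobNorm_nonneg _), Real.sqrt_sq (frobNorm_nonneg _)] at h4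

lemma frobNorm_submatrix_le [DecidableEq β] (M : Matrix α β ℝ) (f : γ → β)
    (hf : Function.Injective f) :
    frobNorm (M.submatrix id f) ≤ frobNorm M := by
  apply Real.sqrt_le_sqrt
  apply Finset.sum_le_sum
  intro i _
  simp only [Matrix.submatrix_apply, id_eq]
  calc ∑ j, M i (f j) ^ 2 = ∑ j ∈ Finset.univ.image f, M i j ^ 2 :=
        (Finset.sum_image (f := fun j => M i j ^ 2) (g := f) (fun a _ b _ h => hf h)).symm
    _ ≤ ∑ j, M i j ^ 2 := Finset.sum_le_sum_of_subset_of_nonneg (Finset.subset_univ _)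
        (fun j _ _ => sq_nonneg _)

lemma submatrix_id_mul (M : Matrix α α ℝ) (A : Matrix α β ℝ) (f : γ → β) :
    (M * A).submatrix id f = M * (A.submatrix id f) := by
  ext i j; simp [Matrix.mul_apply]

end aux

section aux4
variable {α β : Type*} [Fintype α] [Fintype β] [DecidableEq β]

lemma isUnit_gram_of_rank (M : Matrix α β ℝ) (h : M.rank = Fintype.card β) :
    IsUnit (Mᵀ * M) := by
  rw [← Matrix.mulVec_surjective_iff_isUnit]
  have hr : (Mᵀ * M).rank = Fintype.card β := by rw [Matrix.rank_transpose_mul_self, h]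
  have htop : LinearMap.range (Mᵀ * M).mulVecLin = ⊤ := by
    apply Submodule.eq_top_of_finrank_eq
    rw [← Matrix.rank, hr, Module.finrank_pi]
  intro y
  have := htop ▸ Submodule.mem_top (x := y) (R := ℝ)
  obtain ⟨x, hx⟩ := this
  exact ⟨x, hx⟩

lemma pinv_mul_self (M : Matrix α β ℝ) (h : M.rank = Fintype.card β) :
    pinvFR M * M = 1 := by
  rw [pinvFR, Matrix.mul_assoc]
  exact Matrix.nonsing_inv_mul _ ((Matrix.isUnit_iff_isUnit_det _).mp (isUnit_gram_of_rank M h))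

lemma projQ_symm (M : Matrix α β ℝ) : (M * pinvFR M)ᵀ = M * pinvFR M := by
  rw [pinvFR, Matrix.transpose_mul, Matrix.transpose_mul, Matrix.transpose_transpose,
    Matrix.transpose_nonsing_inv, Matrix.transpose_mul, Matrix.transpose_transpose,
    ← Matrix.mul_assoc]

lemma projQ_idem (M : Matrix α β ℝ) (h : M.rank = Fintype.card β) :
    (M * pinvFR M) * (M * pinvFR M) = M * pinvFR M := by
  rw [Matrix.mul_assoc, ← Matrix.mul_assoc (pinvFR M), pinv_mul_self M h, Matrix.one_mul]

lemma projQ_trace (M : Matrix α β ℝ) (h : M.rank = Fintype.card β) :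
    Matrix.trace (M * pinvFR M) = Fintype.card β := by
  rw [Matrix.trace_mul_comm, pinv_mul_self M h, Matrix.trace_one]

end aux4

lemma block_bound {m' n' d' : ℕ} (V : Matrix (Fin m') (Fin n') ℝ)
    (Ci : Matrix (Fin m') (Fin d') ℝ) (f : Fin d' → Fin n') (hf : Function.Injective f)
    (hCf : Ci = V.submatrix id f) (hrank : Ci.rank = d')
    (U : Matrix (Fin m') (Fin d') ℝ) (hU : Uᵀ * U = 1) :
    frobNorm ((1 - Ci * pinvFR Ci) * V) ≤
      frobNorm ((1 - U * Uᵀ) * V) * (1 + specNorm (pinvFR Ci) * specNorm V) := by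
  have hrank' : Ci.rank = Fintype.card (Fin d') := by simpa using hrank
  set P := U * Uᵀ with hP
  set Q := Ci * pinvFR Ci with hQ
  have hPs : Pᵀ = P := by rw [hP, Matrix.transpose_mul, Matrix.transpose_transpose]
  have hPi : P * P = P := by
    rw [hP, Matrix.mul_assoc, ← Matrix.mul_assoc Uᵀ, hU, Matrix.one_mul]
  have hQs : Qᵀ = Q := projQ_symm Ci
  have hQi : Q * Q = Q := projQ_idem Ci hrank'
  have htr : Matrix.trace P = Matrix.trace Q := by
    rw [hP, hQ, Matrix.trace_mul_comm, hU, projQ_trace Ci hrank', Matrix.trace_one]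
  have hE : frobNorm ((1 - Q) * ((1 - P) * V)) ≤ frobNorm ((1 - P) * V) :=
    frobNorm_proj_mul_le hQs hQi _
  have hVsum : (1 - P) * V + P * V = V := by
    rw [Matrix.sub_mul, Matrix.one_mul, sub_add_cancel]
  have hsplit : (1 - Q) * V = (1 - Q) * ((1 - P) * V) + ((1 - Q) * P) * V := by
    rw [Matrix.mul_assoc, ← Matrix.mul_add, hVsum]
  calc frobNorm ((1 - Q) * V)
      = frobNorm ((1 - Q) * ((1 - P) * V) + ((1 - Q) * P) * V) := by rw [← hsplit]
    _ ≤ frobNorm ((1 - Q) * ((1 - P) * V)) + frobNorm (((1 - Q) * P) * V) :=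
        frobNorm_add_le _ _
    _ ≤ frobNorm ((1 - P) * V) + frobNorm ((1 - Q) * P) * specNorm V :=
        add_le_add hE (frobNorm_mul_spec_le _ _)
    _ = frobNorm ((1 - P) * V) + frobNorm ((1 - P) * Q) * specNorm V := by
        rw [frobNorm_proj_swap hPs hPi hQs hQi htr]
    _ ≤ frobNorm ((1 - P) * V) + (frobNorm ((1 - P) * V) * specNorm (pinvFR Ci)) * specNorm V := by
        have h1 : (1 - P) * Q = ((1 - P) * Ci) * pinvFR Ci := by rw [hQ, Matrix.mul_assoc]
        have h2 : frobNorm ((1 - P) * Q) ≤ frobNorm ((1 - P) * Ci) * specNorm (pinvFR Ci) := by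
          rw [h1]; exact frobNorm_mul_spec_le _ _
        have h3 : frobNorm ((1 - P) * Ci) ≤ frobNorm ((1 - P) * V) := by
          rw [hCf, ← submatrix_id_mul]
          exact frobNorm_submatrix_le _ f hf
        have h4 : frobNorm ((1 - P) * Q) ≤ frobNorm ((1 - P) * V) * specNorm (pinvFR Ci) :=
          h2.trans (mul_le_mul_of_nonneg_right h3 (specNorm_nonneg _))
        exact add_le_add (le_refl _) (mul_le_mul_of_nonneg_right h4 (specNorm_nonneg _))
    _ = frobNorm ((1 - P) * V) * (1 + specNorm (pinvFR Ci) * specNorm V) := by ring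

/-- blockwise CSSP error bound: `‖(I - CC†)A‖_F² ≤
Σᵢ (‖(I - ÛᵢÛᵢᵀ)Vᵢ‖_F (1 + ‖Cᵢ†‖₂‖Vᵢ‖₂))²`. -/
theorem partitioned_cssp_blockwise_bound {m k : ℕ} (nn d : Fin k → ℕ)
    (A : Matrix (Fin m) ((i : Fin k) × Fin (nn i)) ℝ)
    (C : Matrix (Fin m) ((i : Fin k) × Fin (d i)) ℝ)
    (hrankC : C.rank = Fintype.card ((i : Fin k) × Fin (d i)))
    (hsel : ∀ i, ∃ f : Fin (d i) → Fin (nn i), Function.Injective f ∧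
      C.submatrix id (Sigma.mk i) = (A.submatrix id (Sigma.mk i)).submatrix id f)
    (hrankCi : ∀ i, (C.submatrix id (Sigma.mk i)).rank = d i)
    (Uh : (i : Fin k) → Matrix (Fin m) (Fin (d i)) ℝ)
    (hUh : ∀ i, (Uh i)ᵀ * Uh i = 1)
    (hEY : ∀ i, ∀ P : Matrix (Fin m) (Fin (d i)) ℝ, Pᵀ * P = 1 →
      frobNorm ((1 - Uh i * (Uh i)ᵀ) * A.submatrix id (Sigma.mk i)) ≤
        frobNorm ((1 - P * Pᵀ) * A.submatrix id (Sigma.mk i)))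
    (hdom : ∀ i, frobNorm ((1 - C * pinvFR C) * A.submatrix id (Sigma.mk i)) ≤
      frobNorm ((1 - C.submatrix id (Sigma.mk i) * pinvFR (C.submatrix id (Sigma.mk i))) *
        A.submatrix id (Sigma.mk i))) :
    frobNorm ((1 - C * pinvFR C) * A) ^ 2 ≤
      ∑ i, (frobNorm ((1 - Uh i * (Uh i)ᵀ) * A.submatrix id (Sigma.mk i)) *
        (1 + specNorm (pinvFR (C.submatrix id (Sigma.mk i))) *
          specNorm (A.submatrix id (Sigma.mk i)))) ^ 2 := by
  have hsum : frobNorm ((1 - C * pinvFR C) * A) ^ 2 =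
      ∑ i, frobNorm ((1 - C * pinvFR C) * A.submatrix id (Sigma.mk i)) ^ 2 := by
    have e1 : ∀ i, (1 - C * pinvFR C) * A.submatrix id (Sigma.mk i)
        = ((1 - C * pinvFR C) * A).submatrix id (Sigma.mk i) := fun i =>
      (submatrix_id_mul _ _ _).symm
    simp_rw [frobNorm_sq_s15, e1, Matrix.submatrix_apply, id_eq]
    rw [Finset.sum_comm, ← Finset.univ_sigma_univ, Finset.sum_sigma]
    exact Finset.sum_congr rfl fun i _ => Finset.sum_comm
  rw [hsum]
  apply Finset.sum_le_sum
  intro i _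
  obtain ⟨f, hf, hCf⟩ := hsel i
  have hb : frobNorm ((1 - C.submatrix id (Sigma.mk i) * pinvFR (C.submatrix id (Sigma.mk i))) *
        A.submatrix id (Sigma.mk i)) ≤
      frobNorm ((1 - Uh i * (Uh i)ᵀ) * A.submatrix id (Sigma.mk i)) *
        (1 + specNorm (pinvFR (C.submatrix id (Sigma.mk i))) *
          specNorm (A.submatrix id (Sigma.mk i))) :=
    block_bound _ _ f hf hCf (hrankCi i) (Uh i) (hUh i)
  exact pow_le_pow_left₀ (frobNorm_nonneg _) ((hdom i).trans hb) 2
end
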